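/- arXiv:math/0602436 — 2 statements merged into one kernel-verified Lean document; each statement's English description precedes it below -/
import Mathlib

section
/- Let Γ be a simple graph of order n with minimum degree δ and at least one edge, and let μ* be the Laplacian spectral radius of Γ (the largest eigenvalue of the Laplacian matrix of Γ). Then every global offensive alliance S in Γ satisfies |S| ≥ ⌈(n/μ*)·⌈(δ+1)/2⌉⌉; in particular the global offensive alliance number satisfies γ_{a_o}(Γ) ≥ ⌈(n/μ*)·⌈(δ+1)/2⌉⌉. -/
open Finset SimpleGraph

/-- `μ` is the second smallest (counted with multiplicity) value of the family `e`. -/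
def IsSecondSmallest {ι : Type*} (e : ι → ℝ) (μ : ℝ) : Prop :=
  ∃ i₀ i₁ : ι, i₀ ≠ i₁ ∧ e i₀ ≤ μ ∧ e i₁ = μ ∧ ∀ j : ι, j ≠ i₀ → μ ≤ e j

/-- `lam` is the largest value of the family `e`. -/
def IsLargest {ι : Type*} (e : ι → ℝ) (lam : ℝ) : Prop :=
  (∃ i : ι, e i = lam) ∧ ∀ i : ι, e i ≤ lam

open Matrix

lemma rayleigh {V : Type*} [Fintype V] [DecidableEq V]
    (A : Matrix V V ℝ) (hA : A.IsHermitian) (mus : ℝ)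
    (h : ∀ i, hA.eigenvalues i ≤ mus) (x : V → ℝ) :
    x ⬝ᵥ (A *ᵥ x) ≤ mus * (x ⬝ᵥ x) := by
  set U : Matrix V V ℝ := (hA.eigenvectorUnitary : Matrix V V ℝ) with hU
  have hstar : star U = Uᵀ := Matrix.conjTranspose_eq_transpose_of_trivial U
  set y : V → ℝ := Uᵀ *ᵥ x with hy
  have hUU : U * star U = 1 := (Matrix.mem_unitaryGroup_iff).mp hA.eigenvectorUnitary.2
  have hspec : A = U * Matrix.diagonal hA.eigenvalues * Uᵀ := by
    have := hA.spectral_theorem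
    rw [← hstar]
    simpa [hU] using this
  have key1 : x ⬝ᵥ (A *ᵥ x) = ∑ i, hA.eigenvalues i * (y i * y i) := by
    conv_lhs => rw [hspec]
    rw [← Matrix.mulVec_mulVec, ← Matrix.mulVec_mulVec, Matrix.dotProduct_mulVec,
      ← Matrix.mulVec_transpose]
    simp only [← hy, dotProduct, Matrix.mulVec_diagonal]
    exact Finset.sum_congr rfl fun i _ => by ring
  have key2 : x ⬝ᵥ x = ∑ i, y i * y i := by
    have : x ⬝ᵥ x = x ⬝ᵥ ((U * Uᵀ) *ᵥ x) := by
      rw [← hstar, hUU, Matrix.one_mulVec]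
    rw [this, ← Matrix.mulVec_mulVec, Matrix.dotProduct_mulVec, ← Matrix.mulVec_transpose]
    simp [← hy, dotProduct]
  rw [key1, key2, Finset.mul_sum]
  exact Finset.sum_le_sum fun i _ => mul_le_mul_of_nonneg_right (h i) (mul_self_nonneg _)

theorem stmt_10 {V : Type*} [Fintype V] [DecidableEq V]
    (G : SimpleGraph V) [DecidableRel G.Adj]
    (n : ℕ) (hn : Fintype.card V = n)
    (d : ℕ) (hd : G.minDegree = d)
    (hedge : 0 < G.edgeFinset.card)
    (mus : ℝ)
    (hmus : ∃ hL : (G.lapMatrix ℝ).IsHermitian, IsLargest hL.eigenvalues mus)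
    (S : Finset V) (hS : S.Nonempty)
    (hoff : ∀ v ∉ S, (G.neighborFinset v \ S).card + 1 ≤ (G.neighborFinset v ∩ S).card)
    :
    ⌈(n : ℝ) / mus * ((⌈((d : ℝ) + 1) / 2⌉ : ℤ) : ℝ)⌉ ≤ (S.card : ℤ) := by
  classical
  subst hn hd
  obtain ⟨hL, hmax⟩ := hmus
  set c : ℤ := ⌈((G.minDegree : ℝ) + 1) / 2⌉ with hc_def
  have hray : ∀ x : V → ℝ, x ⬝ᵥ (G.lapMatrix ℝ *ᵥ x) ≤ mus * (x ⬝ᵥ x) :=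
    fun x => rayleigh _ hL mus hmax.2 x
  -- degree bound : every degree is at most mus
  have hdeg : ∀ u : V, (G.degree u : ℝ) ≤ mus := by
    intro u
    have h := hray (Pi.single u 1)
    simpa [Matrix.mulVec_single, single_dotProduct, lapMatrix, degMatrix] using h
  -- an edge exists
  obtain ⟨u₀, v₀, hadj⟩ : ∃ a b, G.Adj a b := by
    obtain ⟨e, he⟩ := Finset.card_pos.mp hedge
    rw [mem_edgeFinset] at he
    induction e with
    | h a b => exact ⟨a, b, he⟩
  have hd1 : (G.minDegree : ℝ) ≤ mus :=
    le_trans (by exact_mod_cast G.minDegree_le_degree u₀) (hdeg u₀)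
  have h11 : (1 : ℝ) ≤ mus := by
    refine le_trans ?_ (hdeg u₀)
    exact_mod_cast (G.degree_pos_iff_exists_adj u₀).mpr ⟨v₀, hadj⟩
  have hmus_pos : 0 < mus := lt_of_lt_of_le one_pos h11
  -- c ≤ mus
  have hc_mus : (c : ℝ) ≤ mus := by
    have h1 : (c : ℝ) ≤ max (G.minDegree : ℝ) 1 := by
      have : c ≤ max (G.minDegree : ℤ) 1 := by
        apply Int.ceil_le.mpr
        push_cast
        rcases Nat.eq_zero_or_pos G.minDegree with h | h
        · rw [h]; push_cast; norm_num
        · have h1 : (1 : ℝ) ≤ (G.minDegree : ℝ) := by exact_mod_cast h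
          rw [max_eq_left (by linarith)]
          linarith
      calc (c : ℝ) ≤ ((max (G.minDegree : ℤ) 1 : ℤ) : ℝ) := by exact_mod_cast this
        _ = max (G.minDegree : ℝ) 1 := by push_cast; rfl
    exact le_trans h1 (max_le hd1 h11)
  have hn_pos : (0 : ℝ) < (Fintype.card V : ℝ) := by
    have : 0 < Fintype.card V := Fintype.card_pos_iff.mpr ⟨u₀⟩
    exact_mod_cast this
  -- reduce to n * c ≤ mus * |S|
  rw [Int.ceil_le]
  push_cast
  rw [div_mul_eq_mul_div, div_le_iff₀ hmus_pos]
  -- i.e. goal : n * c ≤ S.card * mus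
  set m : ℕ := Sᶜ.card with hm_def
  have hnm : S.card + m = Fintype.card V := S.card_add_card_compl
  rcases Nat.eq_zero_or_pos m with hm0 | hm_pos
  · -- S = V
    have hs : (S.card : ℝ) = (Fintype.card V : ℝ) := by
      have := hnm; rw [hm0] at this; exact_mod_cast by omega
    rw [hs]
    calc (Fintype.card V : ℝ) * (c : ℝ) ≤ (Fintype.card V : ℝ) * mus :=
          mul_le_mul_of_nonneg_left hc_mus hn_pos.le
      _ = (Fintype.card V : ℝ) * mus := rfl
  · -- main case
    set ind : V → ℝ := fun v => if v ∈ S then 0 else 1 with hind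
    set a : ℝ := (m : ℝ) / (Fintype.card V : ℝ) with ha
    set x : V → ℝ := fun v => ind v - a with hx
    -- quadratic form equals edge sum
    have hqf : x ⬝ᵥ (G.lapMatrix ℝ *ᵥ x) =
        (∑ i : V, ∑ j : V, if G.Adj i j then (ind i - ind j) ^ 2 else 0) / 2 := by
      rw [← Matrix.toLinearMap₂'_apply', lapMatrix_toLinearMap₂']
      congr 1
      refine Finset.sum_congr rfl fun i _ => Finset.sum_congr rfl fun j _ => ?_
      simp only [hx, sub_sub_sub_cancel_right]
    -- lower bound of edge sum
    set g : V → V → ℝ := fun i j => if G.Adj i j ∧ i ∉ S ∧ j ∈ S then 1 else 0 with hg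
    have hgle : ∀ i j : V, g i j + g j i ≤ (if G.Adj i j then (ind i - ind j) ^ 2 else 0) := by
      intro i j
      by_cases hij : G.Adj i j
      · have hji : G.Adj j i := G.adj_symm hij
        by_cases hi : i ∈ S <;> by_cases hj : j ∈ S <;>
          simp [hg, hind, hij, hji, hi, hj] <;> norm_num
      · have hji : ¬ G.Adj j i := fun h => hij (G.adj_symm h)
        simp [hg, hij, hji]
    have hrow : ∀ i : V, (∑ j : V, g i j) =
        if i ∈ S then 0 else ((G.neighborFinset i ∩ S).card : ℝ) := by
      intro i
      by_cases hi : i ∈ S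
      · simp [hg, hi]
      · rw [if_neg hi]
        have : ∀ j : V, g i j = if j ∈ G.neighborFinset i ∩ S then (1 : ℝ) else 0 := by
          intro j
          simp only [hg, Finset.mem_inter, mem_neighborFinset]
          by_cases h1 : G.Adj i j <;> by_cases h2 : j ∈ S <;> simp [h1, h2, hi]
        simp_rw [this]
        rw [Finset.sum_ite_mem, Finset.univ_inter, Finset.sum_const]
        simp
    set X : ℝ := ∑ i ∈ Sᶜ, ((G.neighborFinset i ∩ S).card : ℝ) with hX
    have hsum_g : (∑ i : V, ∑ j : V, g i j) = X := by
      simp_rw [hrow]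
      rw [hX]
      rw [show (∑ i : V, if i ∈ S then (0:ℝ) else ((G.neighborFinset i ∩ S).card : ℝ))
          = ∑ i : V, (if i ∈ Sᶜ then ((G.neighborFinset i ∩ S).card : ℝ) else 0) by
        refine Finset.sum_congr rfl fun i _ => ?_
        by_cases hi : i ∈ S <;> simp [hi]]
      rw [Finset.sum_ite_mem, Finset.univ_inter]
    have hlow : 2 * X ≤ ∑ i : V, ∑ j : V, if G.Adj i j then (ind i - ind j) ^ 2 else 0 := by
      have h1 : (∑ i : V, ∑ j : V, (g i j + g j i)) ≤
          ∑ i : V, ∑ j : V, if G.Adj i j then (ind i - ind j) ^ 2 else 0 :=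
        Finset.sum_le_sum fun i _ => Finset.sum_le_sum fun j _ => hgle i j
      have h2 : (∑ i : V, ∑ j : V, (g i j + g j i)) = 2 * X := by
        simp_rw [Finset.sum_add_distrib]
        rw [Finset.sum_comm (f := fun i j => g j i)]
        rw [hsum_g]; ring
      linarith
    -- per-vertex bound
    have hvert : ∀ i ∈ Sᶜ, (c : ℝ) ≤ ((G.neighborFinset i ∩ S).card : ℝ) := by
      intro i hi
      rw [Finset.mem_compl] at hi
      have h1 := hoff i hi
      have h2 : (G.neighborFinset i \ S).card + (G.neighborFinset i ∩ S).card
          = G.degree i := by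
        rw [Finset.card_sdiff_add_card_inter]; rfl
      have h3 : G.minDegree ≤ G.degree i := G.minDegree_le_degree i
      have : ((G.minDegree : ℝ) + 1) / 2 ≤ ((G.neighborFinset i ∩ S).card : ℝ) := by
        have h1' : ((G.neighborFinset i \ S).card : ℝ) + 1
            ≤ ((G.neighborFinset i ∩ S).card : ℝ) := by exact_mod_cast h1
        have h2' : ((G.neighborFinset i \ S).card : ℝ) + ((G.neighborFinset i ∩ S).card : ℝ)
            = (G.degree i : ℝ) := by exact_mod_cast h2
        have h3' : (G.minDegree : ℝ) ≤ (G.degree i : ℝ) := by exact_mod_cast h3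
        linarith
      have hcast : ((G.neighborFinset i ∩ S).card : ℝ)
          = (((G.neighborFinset i ∩ S).card : ℤ) : ℝ) := by push_cast; rfl
      have h4 : c ≤ ((G.neighborFinset i ∩ S).card : ℤ) :=
        Int.ceil_le.mpr (by rw [← hcast]; exact this)
      exact_mod_cast h4
    have hXlow : (m : ℝ) * (c : ℝ) ≤ X := by
      rw [hX]
      calc (m : ℝ) * (c : ℝ) = ∑ _i ∈ Sᶜ, (c : ℝ) := by
            rw [Finset.sum_const, hm_def, nsmul_eq_mul]
        _ ≤ ∑ i ∈ Sᶜ, ((G.neighborFinset i ∩ S).card : ℝ) := Finset.sum_le_sum hvert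
    -- norm of x
    have hsum_ind : ∑ v : V, ind v = (m : ℝ) := by
      rw [show (∑ v : V, ind v) = ∑ v : V, (if v ∈ Sᶜ then (1:ℝ) else 0) by
        refine Finset.sum_congr rfl fun v _ => ?_
        by_cases hv : v ∈ S <;> simp [hind, hv]]
      rw [Finset.sum_ite_mem, Finset.univ_inter, Finset.sum_const]
      simp [hm_def]
    have hind_sq : ∀ v : V, ind v * ind v = ind v := by
      intro v; by_cases hv : v ∈ S <;> simp [hind, hv]
    have hxx : x ⬝ᵥ x = (m : ℝ) - (m : ℝ) ^ 2 / (Fintype.card V : ℝ) := by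
      have : x ⬝ᵥ x = ∑ v : V, (ind v * ind v - 2 * a * ind v + a ^ 2) := by
        simp only [dotProduct, hx]
        exact Finset.sum_congr rfl fun v _ => by ring
      rw [this]
      simp_rw [hind_sq]
      rw [Finset.sum_add_distrib, Finset.sum_sub_distrib, hsum_ind, ← Finset.mul_sum,
        hsum_ind, Finset.sum_const, Finset.card_univ, nsmul_eq_mul, ha]
      field_simp
      ring
    -- combine
    have hchain : (m : ℝ) * (c : ℝ) ≤ mus * ((m : ℝ) - (m : ℝ) ^ 2 / (Fintype.card V : ℝ)) := by
      calc (m : ℝ) * (c : ℝ) ≤ X := hXlow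
        _ ≤ x ⬝ᵥ (G.lapMatrix ℝ *ᵥ x) := by rw [hqf]; linarith
        _ ≤ mus * (x ⬝ᵥ x) := hray x
        _ = mus * ((m : ℝ) - (m : ℝ) ^ 2 / (Fintype.card V : ℝ)) := by rw [hxx]
    have hm_pos' : (0 : ℝ) < (m : ℝ) := by exact_mod_cast hm_pos
    have hsm : (S.card : ℝ) = (Fintype.card V : ℝ) - (m : ℝ) := by
      have : (S.card : ℝ) + (m : ℝ) = (Fintype.card V : ℝ) := by exact_mod_cast hnm
      linarith
    have hfact : (m : ℝ) - (m : ℝ) ^ 2 / (Fintype.card V : ℝ)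
        = (m : ℝ) * (S.card : ℝ) / (Fintype.card V : ℝ) := by
      rw [hsm]; field_simp
    rw [hfact] at hchain
    -- m * c ≤ mus * (m * s / n)  →  n * c ≤ s * mus
    rw [show mus * ((m : ℝ) * (S.card : ℝ) / (Fintype.card V : ℝ))
        = (m : ℝ) * (mus * (S.card : ℝ) / (Fintype.card V : ℝ)) by ring] at hchain
    have := (mul_le_mul_iff_right₀ hm_pos').mp hchain
    rw [le_div_iff₀ hn_pos] at this
    linarith [this]
end

section
/- Let Γ be a simple graph of order n and size m, and let λ be the spectral radius of Γ (the largest eigenvalue of the adjacency matrix of Γ). Then every global strong dual alliance S in Γ satisfies |S| ≥ ⌈(m+n)/(2λ+1)⌉; in particular the global strong dual alliance number satisfies γ_{â_d}(Γ) ≥ ⌈(m+n)/(2λ+1)⌉. -/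
open Finset SimpleGraph

open scoped Matrix

open Matrix in
theorem rayleigh_aux {V : Type*} [Fintype V] [DecidableEq V] (A : Matrix V V ℝ) (hA : A.IsHermitian)
    (lam : ℝ) (hle : ∀ i, hA.eigenvalues i ≤ lam) (x : V → ℝ) :
    x ⬝ᵥ (A *ᵥ x) ≤ lam * (x ⬝ᵥ x) := by
  set U : Matrix V V ℝ := (hA.eigenvectorUnitary : Matrix V V ℝ) with hU
  set y : V → ℝ := star U *ᵥ x with hy
  have hstar : star U = Uᵀ := by
    rw [Matrix.star_eq_conjTranspose, Matrix.conjTranspose_eq_transpose_of_trivial]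
  have hUy : U *ᵥ y = x := by
    rw [hy, mulVec_mulVec, (Matrix.mem_unitaryGroup_iff).mp hA.eigenvectorUnitary.2, one_mulVec]
  have hdot : ∀ z : V → ℝ, x ⬝ᵥ (U *ᵥ z) = y ⬝ᵥ z := by
    intro z
    rw [Matrix.dotProduct_mulVec, hy, hstar, Matrix.mulVec_transpose]
  have hform : x ⬝ᵥ (A *ᵥ x) = ∑ i, hA.eigenvalues i * (y i)^2 := by
    have hAx : A *ᵥ x = U *ᵥ ((Matrix.diagonal hA.eigenvalues) *ᵥ y) := by
      conv_lhs => rw [hA.spectral_theorem]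
      simp only [hU, ← mulVec_mulVec, hy]
      norm_num
      rw [Matrix.mul_assoc]
    rw [hAx, hdot]
    simp [dotProduct, Matrix.mulVec_diagonal, sq, mul_comm, mul_assoc, mul_left_comm]
  have hnorm : x ⬝ᵥ x = ∑ i, (y i)^2 := by
    have h1 : x ⬝ᵥ x = y ⬝ᵥ y := by
      calc x ⬝ᵥ x = x ⬝ᵥ (U *ᵥ y) := by rw [hUy]
        _ = y ⬝ᵥ y := hdot y
    rw [h1]; simp [dotProduct, sq]
  rw [hform, hnorm, Finset.mul_sum]
  exact Finset.sum_le_sum fun i _ => mul_le_mul_of_nonneg_right (hle i) (sq_nonneg _)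

theorem stmt_15 {V : Type*} [Fintype V] [DecidableEq V]
    (G : SimpleGraph V) [DecidableRel G.Adj]
    (n : ℕ) (hn : Fintype.card V = n)
    (m : ℕ) (hm : G.edgeFinset.card = m)
    (lam : ℝ)
    (hlam : ∃ hA : (G.adjMatrix ℝ).IsHermitian, IsLargest hA.eigenvalues lam)
    (S : Finset V) (hS : S.Nonempty)
    (hdef : ∀ v ∈ S, (G.neighborFinset v \ S).card ≤ (G.neighborFinset v ∩ S).card)
    (hoff : ∀ v ∉ S, (G.neighborFinset v \ S).card + 2 ≤ (G.neighborFinset v ∩ S).card)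
    :
    ⌈((m : ℝ) + n) / (2 * lam + 1)⌉ ≤ (S.card : ℤ) := by
  obtain ⟨hA, ⟨-, hle⟩⟩ := hlam
  classical
  let a : V → ℕ := fun v => (G.neighborFinset v ∩ S).card
  let b : V → ℕ := fun v => (G.neighborFinset v \ S).card
  have hcard_a : ∀ v, a v = ∑ w ∈ S, if G.Adj v w then 1 else 0 := by
    intro v
    show (G.neighborFinset v ∩ S).card = _
    simp only [Finset.inter_comm, ← Finset.filter_mem_eq_inter, Finset.card_filter,
      SimpleGraph.mem_neighborFinset]
  have hcard_b : ∀ v, b v = ∑ w ∈ Sᶜ, if G.Adj v w then 1 else 0 := by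
    intro v
    show (G.neighborFinset v \ S).card = _
    have h : G.neighborFinset v \ S = Sᶜ.filter (· ∈ G.neighborFinset v) := by
      ext w; simp [Finset.mem_sdiff, and_comm]
    rw [h, Finset.card_filter]
    simp only [SimpleGraph.mem_neighborFinset]
  have hswap : ∑ v ∈ Sᶜ, a v = ∑ v ∈ S, b v := by
    simp only [hcard_a, hcard_b]
    rw [Finset.sum_comm]
    congr 1; ext w; congr 1; ext v; simp [SimpleGraph.adj_comm]
  have hdegsum : ∑ v, (a v + b v) = 2 * m := by
    have h1 : ∀ v, a v + b v = G.degree v := fun v =>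
      Finset.card_inter_add_card_sdiff _ _
    simp only [h1]
    rw [← hm]
    exact G.sum_degrees_eq_twice_card_edges
  have hkey : 2 * m + 2 * n ≤ 4 * ∑ v ∈ S, a v + 2 * S.card := by
    have hsplit : ∑ v, (a v + b v) = ∑ v ∈ S, (a v + b v) + ∑ v ∈ Sᶜ, (a v + b v) := by
      rw [Finset.sum_add_sum_compl]
    have hnsplit : n = S.card + Sᶜ.card := by
      rw [← hn, Finset.card_add_card_compl]
    have h1 : ∑ v ∈ S, (a v + b v) ≤ ∑ v ∈ S, 2 * a v :=
      Finset.sum_le_sum fun v hv => by have h : b v ≤ a v := hdef v hv; omega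
    have h3 : ∑ v ∈ Sᶜ, (a v + b v + 2) ≤ ∑ v ∈ Sᶜ, 2 * a v :=
      Finset.sum_le_sum fun v hv => by
        have h : b v + 2 ≤ a v := hoff v (Finset.mem_compl.mp hv); omega
    have h4 : ∑ v ∈ Sᶜ, (a v + b v + 2) = ∑ v ∈ Sᶜ, (a v + b v) + 2 * Sᶜ.card := by
      rw [Finset.sum_add_distrib, Finset.sum_const, smul_eq_mul]; ring
    have h5 : ∑ v ∈ Sᶜ, 2 * a v = 2 * ∑ v ∈ S, b v := by
      rw [← Finset.mul_sum, hswap]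
    have h6 : ∑ v ∈ S, b v ≤ ∑ v ∈ S, a v := Finset.sum_le_sum fun v hv => hdef v hv
    have h1' : ∑ v ∈ S, (a v + b v) ≤ 2 * ∑ v ∈ S, a v := by
      rw [← Finset.mul_sum] at h1; exact h1
    omega
  -- Rayleigh bound
  set x : V → ℝ := fun v => if v ∈ S then 1 else 0 with hx
  have h1 : ∀ v, ((G.adjMatrix ℝ) *ᵥ x) v = (a v : ℝ) := by
    intro v
    rw [SimpleGraph.adjMatrix_mulVec_apply]
    show _ = ((G.neighborFinset v ∩ S).card : ℝ)
    rw [Finset.sum_ite_mem]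
    simp
  have hqf : x ⬝ᵥ ((G.adjMatrix ℝ) *ᵥ x) = ((∑ v ∈ S, a v : ℕ) : ℝ) := by
    rw [dotProduct]
    simp only [h1, hx, ite_mul, one_mul, zero_mul]
    rw [Finset.sum_ite_mem, Finset.univ_inter]
    push_cast
    exact Finset.sum_congr rfl fun v _ => h1 v
  have hxx : x ⬝ᵥ x = (S.card : ℝ) := by
    rw [dotProduct]
    have hsq : ∀ v, x v * x v = if v ∈ S then (1:ℝ) else 0 := fun v => by
      by_cases h : v ∈ S <;> simp [hx, h]
    simp only [hsq]
    rw [Finset.sum_ite_mem, Finset.univ_inter, Finset.sum_const]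
    simp
  have hray := rayleigh_aux _ hA lam hle x
  rw [hqf, hxx] at hray
  -- lam ≥ 0
  obtain ⟨v₀, -⟩ := hS
  have hlam0 : 0 ≤ lam := by
    have h := rayleigh_aux _ hA lam hle (Pi.single v₀ 1)
    have hz : (Pi.single v₀ 1 : V → ℝ) ⬝ᵥ ((G.adjMatrix ℝ) *ᵥ Pi.single v₀ 1) = 0 := by
      simp only [dotProduct, Matrix.mulVec, Pi.single_apply,
        SimpleGraph.adjMatrix_apply]
      rw [Finset.sum_eq_zero]
      intro v _
      rcases eq_or_ne v v₀ with rfl | h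
      · simp
      · simp [h]
    have ho : (Pi.single v₀ 1 : V → ℝ) ⬝ᵥ (Pi.single v₀ 1 : V → ℝ) = 1 := by
      simp [dotProduct, Pi.single_apply]
    rw [hz, ho, mul_one] at h
    exact h
  have hpos : (0:ℝ) < 2 * lam + 1 := by linarith
  rw [Int.ceil_le]
  push_cast
  rw [div_le_iff₀ hpos]
  have hkeyR : 2 * (m:ℝ) + 2 * n ≤ 4 * ((∑ v ∈ S, a v : ℕ) : ℝ) + 2 * S.card := by
    exact_mod_cast hkey
  nlinarith [hray, hkeyR]
end
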